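/- Let V = V₁ ⊗ V₂ over F_q with dim V₁ = t, dim V₂ = r, and let G = G_t ∘ G_r be a central product acting faithfully and semisimply on V as a subgroup of GL_t(q) ∘ GL_r(q), with G_t acting on V₁ and G_r on V₂. If H^1(G_t, V₁) = 0 and H^1(G_r, V₂) = 0, then H^1(G, V) = 0. -/

import Mathlib

open groupCohomology TensorProduct


section helpers2
variable {F V₁ V₂ : Type} [Field F] [AddCommGroup V₁] [Module F V₁]
  [AddCommGroup V₂] [Module F V₂]

noncomputable def piR (c : V₂ →ₗ[F] F) : V₁ ⊗[F] V₂ →ₗ[F] V₁ :=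
  (TensorProduct.rid F V₁).toLinearMap ∘ₗ TensorProduct.map LinearMap.id c

@[simp] lemma piR_tmul (c : V₂ →ₗ[F] F) (v : V₁) (w : V₂) :
    piR c (v ⊗ₜ[F] w) = c w • v := by simp [piR]

noncomputable def piL (c : V₁ →ₗ[F] F) : V₁ ⊗[F] V₂ →ₗ[F] V₂ :=
  (TensorProduct.lid F V₂).toLinearMap ∘ₗ TensorProduct.map c LinearMap.id

@[simp] lemma piL_tmul (c : V₁ →ₗ[F] F) (v : V₁) (w : V₂) :
    piL c (v ⊗ₜ[F] w) = c v • w := by simp [piL]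

lemma tensor_recon_right {ι : Type} [Fintype ι] (b : Module.Basis ι F V₂) (x : V₁ ⊗[F] V₂) :
    ∑ i, (piR (b.coord i) x) ⊗ₜ[F] b i = x := by
  induction x using TensorProduct.induction_on with
  | zero => simp
  | tmul v w =>
      simp only [piR_tmul, TensorProduct.smul_tmul]
      rw [← TensorProduct.tmul_sum]
      congr 1
      simpa using b.sum_repr w
  | add x y hx hy =>
      simp only [map_add, TensorProduct.add_tmul, Finset.sum_add_distrib, hx, hy]

lemma tensor_recon_left_sub {κ : Type} [Fintype κ] {U : Submodule F V₁} (u : Module.Basis κ F U)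
    (lam : κ → (V₁ →ₗ[F] F)) (hlam : ∀ j (y : U), lam j (y : V₁) = u.coord j y)
    (x' : U ⊗[F] V₂) :
    ∑ j, (u j : V₁) ⊗ₜ[F]
        piL (lam j) (TensorProduct.map U.subtype LinearMap.id x') =
      TensorProduct.map U.subtype LinearMap.id x' := by
  induction x' using TensorProduct.induction_on with
  | zero => simp
  | tmul y w =>
      simp only [TensorProduct.map_tmul, Submodule.coe_subtype, LinearMap.id_coe, id_eq,
        piL_tmul, hlam]
      have : ∀ j, ((u j : V₁)) ⊗ₜ[F] ((u.coord j) y • w)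
          = ((u.coord j) y • (u j : V₁)) ⊗ₜ[F] w := by
        intro j; rw [TensorProduct.tmul_smul, TensorProduct.smul_tmul']
      rw [Finset.sum_congr rfl fun j _ => this j, ← TensorProduct.sum_tmul]
      congr 1
      have := u.sum_repr y
      calc ∑ j, (u.coord j) y • (u j : V₁)
          = ((∑ j, (u.coord j) y • u j : U) : V₁) := by
            push_cast [Submodule.coe_sum]; rfl
        _ = (y : V₁) := by rw [show (∑ j, (u.coord j) y • u j : U) = y by simpa using u.sum_repr y]
  | add x y hx hy =>
      simp only [map_add, TensorProduct.tmul_add, Finset.sum_add_distrib, hx, hy]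

lemma exists_lift_of_components_mem {ι : Type} [Fintype ι] (b : Module.Basis ι F V₂)
    {U : Submodule F V₁} (x : V₁ ⊗[F] V₂) (hx : ∀ i, piR (b.coord i) x ∈ U) :
    ∃ x' : U ⊗[F] V₂, TensorProduct.map U.subtype LinearMap.id x' = x := by
  refine ⟨∑ i, (⟨piR (b.coord i) x, hx i⟩ : U) ⊗ₜ[F] b i, ?_⟩
  rw [map_sum]
  simpa using tensor_recon_right b x


lemma piR_equivariant {F V₁ V₂ : Type} [Field F] [AddCommGroup V₁] [Module F V₁]
    [AddCommGroup V₂] [Module F V₂] (c : V₂ →ₗ[F] F) (s : V₁ →ₗ[F] V₁) (x : V₁ ⊗[F] V₂) :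
    piR c (TensorProduct.map s LinearMap.id x) = s (piR c x) := by
  induction x using TensorProduct.induction_on with
  | zero => simp
  | tmul v w => simp
  | add x y hx hy => simp [map_add, hx, hy]

lemma piL_equivariant {F V₁ V₂ : Type} [Field F] [AddCommGroup V₁] [Module F V₁]
    [AddCommGroup V₂] [Module F V₂] (c : V₁ →ₗ[F] F) (t : V₂ →ₗ[F] V₂) (x : V₁ ⊗[F] V₂) :
    piL c (TensorProduct.map LinearMap.id t x) = t (piL c x) := by
  induction x using TensorProduct.induction_on with
  | zero => simp
  | tmul v w => simp
  | add x y hx hy => simp [map_add, hx, hy]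

lemma h1_subsingleton_iff' {k G : Type} [CommRing k] [Group G] (A : Rep k G) :
    Subsingleton (groupCohomology.H1 A) ↔
      ∀ f ∈ cocycles₁ A, ∃ x : A, ∀ g : G, A.ρ g x - x = f g := by
  constructor
  · intro h f hf
    obtain ⟨x, hx⟩ := (H1π_eq_zero_iff (A := A) ⟨f, hf⟩).1 (Subsingleton.elim _ _)
    exact ⟨x, fun g => by rw [← d₀₁_hom_apply]; exact congrFun hx g⟩
  · intro h
    refine subsingleton_of_forall_eq 0 fun a => ?_
    induction a using H1_induction_on with
    | h x =>
      rw [H1π_eq_zero_iff]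
      obtain ⟨y, hy⟩ := h x x.2
      exact ⟨y, funext fun g => by rw [d₀₁_hom_apply, hy]⟩

/-- Let `V = V₁ ⊗ V₂` over `F_q` and let `G = G_t ∘ G_r` be a central
product (a quotient of `G_t × G_r`) acting faithfully and semisimply on `V` as a subgroup of
`GL(V₁) ∘ GL(V₂)`, with `G_t` acting on `V₁` (via `ρ₁`) and `G_r` acting on `V₂` (via `ρ₂`),
an element `φ (σ, τ)` of the central product acting as `σ ⊗ τ`.
If `H¹(G_t, V₁) = 0` and `H¹(G_r, V₂) = 0`, then `H¹(G, V) = 0`. -/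
theorem h1_central_product_tensor_eq_zero
    (F : Type) [Field F] [Fintype F]
    (V₁ V₂ : Type) [AddCommGroup V₁] [Module F V₁] [FiniteDimensional F V₁]
    [AddCommGroup V₂] [Module F V₂] [FiniteDimensional F V₂]
    (Gt Gr G : Type) [Group Gt] [Group Gr] [Group G]
    (ρ₁ : Representation F Gt V₁) (ρ₂ : Representation F Gr V₂)
    (φ : Gt × Gr →* G) (hφ : Function.Surjective φ)
    (ρ : Representation F G (V₁ ⊗[F] V₂))
    (hcompat : ∀ (σ : Gt) (τ : Gr), ρ (φ (σ, τ)) = TensorProduct.map (ρ₁ σ) (ρ₂ τ))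
    (hfaith : Function.Injective ρ)
    (hss : ∀ W : Submodule F (V₁ ⊗[F] V₂), (∀ g : G, ∀ v ∈ W, ρ g v ∈ W) →
      ∃ W' : Submodule F (V₁ ⊗[F] V₂), (∀ g : G, ∀ v ∈ W', ρ g v ∈ W') ∧ IsCompl W W')
    (h1 : Subsingleton (groupCohomology.H1 (Rep.of ρ₁)))
    (h2 : Subsingleton (groupCohomology.H1 (Rep.of ρ₂))) :
    Subsingleton (groupCohomology.H1 (Rep.of ρ)) := by
  rw [h1_subsingleton_iff'] at h1 h2 ⊢
  intro f₀ hf₀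
  rw [mem_cocycles₁_iff] at hf₀
  obtain ⟨f, hfV⟩ : ∃ f : G → V₁ ⊗[F] V₂, ∀ g : G, f₀ g = f g := ⟨f₀, fun g => rfl⟩
  have hf : ∀ g h : G, f (g * h) = ρ g (f h) + f g := by
    intro g h
    rw [← hfV, ← hfV, ← hfV]
    exact hf₀ g h
  -- basic facts about the action
  have hσ1 : ∀ σ : Gt, ρ (φ (σ, 1)) = TensorProduct.map (ρ₁ σ) LinearMap.id := by
    intro σ; rw [hcompat]; congr 1; rw [map_one]; rfl
  have hτ1 : ∀ τ : Gr, ρ (φ (1, τ)) = TensorProduct.map LinearMap.id (ρ₂ τ) := by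
    intro τ; rw [hcompat]; congr 1; rw [map_one]; rfl
  -- basis of V₂
  obtain ⟨ι₂, hι₂, b₂⟩ : ∃ (ι₂ : Type) (_ : Fintype ι₂), Nonempty (Module.Basis ι₂ F V₂) :=
    ⟨Fin (Module.finrank F V₂), inferInstance, ⟨Module.finBasis F V₂⟩⟩
  obtain ⟨b₂⟩ := b₂
  -- step 1: kill the cocycle on Gt × 1
  have hcoc1 : ∀ i : ι₂, ∃ x : V₁, ∀ σ : Gt,
      ρ₁ σ x - x = piR (b₂.coord i) (f (φ (σ, 1))) := by
    intro i
    have hmem : (fun σ : Gt => piR (b₂.coord i) (f (φ (σ, 1)))) ∈ cocycles₁ (Rep.of ρ₁) := by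
      refine (mem_cocycles₁_iff _).2 ?_
      intro σ σ'
      show piR (b₂.coord i) (f (φ (σ * σ', 1)))
        = ρ₁ σ (piR (b₂.coord i) (f (φ (σ', 1)))) + piR (b₂.coord i) (f (φ (σ, 1)))
      have hmul : φ (σ * σ', (1 : Gr)) = φ (σ, 1) * φ (σ', 1) := by
        rw [← map_mul]; simp [Prod.ext_iff]
      rw [hmul, hf, map_add, hσ1 σ, piR_equivariant]
    obtain ⟨x, hx⟩ := h1 _ hmem
    exact ⟨x, fun σ => hx σ⟩
  choose vv hvv using hcoc1
  obtain ⟨v, hv⟩ : ∃ v : V₁ ⊗[F] V₂, ∀ σ : Gt, f (φ (σ, 1)) = ρ (φ (σ, 1)) v - v := by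
    refine ⟨∑ i, vv i ⊗ₜ[F] b₂ i, fun σ => ?_⟩
    conv_lhs => rw [← tensor_recon_right b₂ (f (φ (σ, 1)))]
    rw [hσ1 σ, map_sum, ← Finset.sum_sub_distrib]
    refine Finset.sum_congr rfl fun i _ => ?_
    simp only [TensorProduct.map_tmul, LinearMap.id_coe, id_eq]
    rw [← TensorProduct.sub_tmul, hvv]
  -- modified cocycle f'
  obtain ⟨f', hf'eq, hf', hf'σ⟩ : ∃ f' : G → V₁ ⊗[F] V₂,
      (∀ g : G, f g = f' g + (ρ g v - v)) ∧
      (∀ g h : G, f' (g * h) = ρ g (f' h) + f' g) ∧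
      (∀ σ : Gt, f' (φ (σ, 1)) = 0) := by
    refine ⟨fun g => f g - (ρ g v - v), fun g => (sub_add_cancel _ _).symm,
      fun g h => ?_, fun σ => ?_⟩
    · show f (g * h) - (ρ (g * h) v - v)
        = ρ g (f h - (ρ h v - v)) + (f g - (ρ g v - v))
      simp only [hf, map_mul, map_sub, Module.End.mul_apply]
      abel
    · show f (φ (σ, 1)) - (ρ (φ (σ, 1)) v - v) = 0
      rw [hv σ, sub_self]
  set c2 : Gr → V₁ ⊗[F] V₂ := fun τ => f' (φ (1, τ)) with hc2def
  have hsplit2 : ∀ (σ : Gt) (τ : Gr), f' (φ (σ, τ)) = c2 τ := by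
    intro σ τ
    have hmul : φ (σ, τ) = φ (1, τ) * φ (σ, 1) := by
      rw [← map_mul]; simp [Prod.ext_iff]
    rw [hmul, hf', hf'σ, map_zero, zero_add]
  have hfix : ∀ (σ : Gt) (τ : Gr),
      TensorProduct.map (ρ₁ σ) LinearMap.id (c2 τ) = c2 τ := by
    intro σ τ
    have hmul : φ (σ, τ) = φ (σ, 1) * φ (1, τ) := by
      rw [← map_mul]; simp [Prod.ext_iff]
    have h1' : f' (φ (σ, τ)) = TensorProduct.map (ρ₁ σ) LinearMap.id (c2 τ) := by
      rw [hmul, hf', hf'σ, add_zero, hσ1 σ]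
    rw [← h1', hsplit2]
  -- invariant subspace machinery
  have hUmem : ∀ (τ : Gr) (i : ι₂),
      piR (b₂.coord i) (c2 τ) ∈ Representation.invariants ρ₁ := by
    intro τ i
    rw [Representation.mem_invariants]
    intro σ
    rw [← piR_equivariant (b₂.coord i) (ρ₁ σ), hfix]
  set U : Submodule F V₁ := Representation.invariants ρ₁ with hUdef
  obtain ⟨κ, hκ, u⟩ : ∃ (κ : Type) (_ : Fintype κ), Nonempty (Module.Basis κ F U) :=
    ⟨Fin (Module.finrank F U), inferInstance, ⟨Module.finBasis F U⟩⟩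
  obtain ⟨u⟩ := u
  obtain ⟨C, hC⟩ := Submodule.exists_isCompl U
  obtain ⟨lam, hlam⟩ : ∃ lam : κ → (V₁ →ₗ[F] F), ∀ j (y : U), lam j (y : V₁) = u.coord j y :=
    ⟨fun j => (u.coord j) ∘ₗ (Submodule.linearProjOfIsCompl U C hC),
      fun j y => by rw [LinearMap.comp_apply, show U.linearProjOfIsCompl C hC ↑y = y from Submodule.projectionOnto_apply_left hC y]⟩
  -- step 2: kill the cocycle on 1 × Gr
  have hcoc2 : ∀ j : κ, ∃ x : V₂, ∀ τ : Gr, ρ₂ τ x - x = piL (lam j) (c2 τ) := by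
    intro j
    have hmem : (fun τ : Gr => piL (lam j) (c2 τ)) ∈ cocycles₁ (Rep.of ρ₂) := by
      refine (mem_cocycles₁_iff _).2 ?_
      intro τ τ'
      show piL (lam j) (c2 (τ * τ')) = ρ₂ τ (piL (lam j) (c2 τ')) + piL (lam j) (c2 τ)
      have hmul : φ ((1 : Gt), τ * τ') = φ (1, τ) * φ (1, τ') := by
        rw [← map_mul]; simp [Prod.ext_iff]
      simp only [hc2def]
      rw [hmul, hf', map_add, hτ1 τ, piL_equivariant]
    obtain ⟨x, hx⟩ := h2 _ hmem
    exact ⟨x, fun τ => hx τ⟩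
  choose ww hww using hcoc2
  obtain ⟨w, hw1, hw2⟩ : ∃ w : V₁ ⊗[F] V₂,
      (∀ σ : Gt, TensorProduct.map (ρ₁ σ) LinearMap.id w = w) ∧
      (∀ τ : Gr, c2 τ = TensorProduct.map LinearMap.id (ρ₂ τ) w - w) := by
    refine ⟨∑ j, (u j : V₁) ⊗ₜ[F] ww j, fun σ => ?_, fun τ => ?_⟩
    · rw [map_sum]
      refine Finset.sum_congr rfl fun j _ => ?_
      simp only [TensorProduct.map_tmul, LinearMap.id_coe, id_eq]
      congr 1
      exact (u j).2 σ
    · obtain ⟨x', hx'⟩ := exists_lift_of_components_mem b₂ (c2 τ) (hUmem τ)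
      conv_lhs => rw [← hx', ← tensor_recon_left_sub u lam hlam x', hx']
      rw [map_sum, ← Finset.sum_sub_distrib]
      refine Finset.sum_congr rfl fun j _ => ?_
      simp only [TensorProduct.map_tmul, LinearMap.id_coe, id_eq]
      rw [← TensorProduct.tmul_sub, hww]
  -- conclusion
  have hfinal : ∀ g : G, ρ g (v + w) - (v + w) = f g := by
    intro g
    obtain ⟨⟨σ, τ⟩, rfl⟩ := hφ g
    have hρw : ρ (φ (σ, τ)) w - w = c2 τ := by
      have hmap : ρ (φ (σ, τ)) w
          = TensorProduct.map (ρ₁ σ) LinearMap.id (TensorProduct.map LinearMap.id (ρ₂ τ) w) := by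
        rw [hcompat, ← LinearMap.comp_apply, ← TensorProduct.map_comp]
        simp
      have h2' : TensorProduct.map LinearMap.id (ρ₂ τ) w = c2 τ + w := by rw [hw2]; abel
      rw [hmap, h2', map_add, hfix, hw1]
      abel
    rw [hf'eq, hsplit2, ← hρw, map_add]
    abel
  exact ⟨v + w, fun g => by rw [hfV g]; exact hfinal g⟩
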